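/- Let r(u,v) = (u, cosh u cos v, cosh u sin v) be the catenoid and let ρ(u,v) = sinh u cos v. Then: (i) ρ is harmonic: ρ_uu + ρ_vv = 0; (ii) the unit normal is n(u,v) = (1/cosh u)·(sinh u, −cos v, −sin v); (iii) with τ = (ρ_u·r_v − ρ_v·r_u)/‖r_u × r_v‖ one has τ(u,v) × n(u,v) = (1/cosh u)·(cos v, sinh u, 0); consequently Borisenko's special Lagrangian submanifold N = {(p, τ(p)×n(p) + t n(p))} is parametrized by H(u,v,t) = ( (u, cosh u cos v, cosh u sin v), ( cos v/cosh u + t·tanh u, tanh u − t·cos v/cosh u, −t·sin v/cosh u ) ) in ℝ³ ⊕ ℝ³ ≅ ℂ³. -/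

import Mathlib

/-- The catenoid parametrization `r(u,v) = (u, cosh u cos v, cosh u sin v)`. -/
noncomputable def catenoid (u v : ℝ) : Fin 3 → ℝ :=
  ![u, Real.cosh u * Real.cos v, Real.cosh u * Real.sin v]

/-- The harmonic function `ρ(u,v) = sinh u cos v` on the catenoid. -/
noncomputable def rho (u v : ℝ) : ℝ := Real.sinh u * Real.cos v

/-- `∂r/∂u`. -/
noncomputable def ru (u v : ℝ) : Fin 3 → ℝ := fun i => deriv (fun s => catenoid s v i) u

/-- `∂r/∂v`. -/
noncomputable def rv (u v : ℝ) : Fin 3 → ℝ := fun i => deriv (fun s => catenoid u s i) v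

/-- `∂ρ/∂u`. -/
noncomputable def rhou (u v : ℝ) : ℝ := deriv (fun s => rho s v) u

/-- `∂ρ/∂v`. -/
noncomputable def rhov (u v : ℝ) : ℝ := deriv (fun s => rho u s) v

/-- `∂²ρ/∂u²`. -/
noncomputable def rhouu (u v : ℝ) : ℝ := deriv (fun s => rhou s v) u

/-- `∂²ρ/∂v²`. -/
noncomputable def rhovv (u v : ℝ) : ℝ := deriv (fun s => rhov u s) v

/-- The Euclidean inner product on `ℝ³`. -/
def dot3 (a b : Fin 3 → ℝ) : ℝ := a 0 * b 0 + a 1 * b 1 + a 2 * b 2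

/-- The Euclidean norm on `ℝ³`. -/
noncomputable def norm3 (a : Fin 3 → ℝ) : ℝ := Real.sqrt (dot3 a a)

/-- The unit normal `n = (r_u × r_v)/‖r_u × r_v‖` of the catenoid. -/
noncomputable def nrm (u v : ℝ) : Fin 3 → ℝ :=
  (norm3 (crossProduct (ru u v) (rv u v)))⁻¹ • crossProduct (ru u v) (rv u v)

/-- The tangent field `τ = (ρ_u·r_v − ρ_v·r_u)/‖r_u × r_v‖`. -/
noncomputable def tau (u v : ℝ) : Fin 3 → ℝ :=
  (norm3 (crossProduct (ru u v) (rv u v)))⁻¹ • (rhou u v • rv u v - rhov u v • ru u v)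

lemma ru_eq (u v : ℝ) : ru u v = ![1, Real.sinh u * Real.cos v, Real.sinh u * Real.sin v] := by
  funext i
  fin_cases i <;> simp [ru, catenoid]

lemma rv_eq (u v : ℝ) : rv u v = ![0, -(Real.cosh u * Real.sin v), Real.cosh u * Real.cos v] := by
  funext i
  fin_cases i <;> simp [rv, catenoid]

lemma rhou_eq (u v : ℝ) : rhou u v = Real.cosh u * Real.cos v := by
  simp [rhou, rho]

lemma rhov_eq (u v : ℝ) : rhov u v = -(Real.sinh u * Real.sin v) := by
  simp [rhov, rho]

lemma cross_eq (u v : ℝ) : crossProduct (ru u v) (rv u v) =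
    ![Real.sinh u * Real.cosh u, -(Real.cosh u * Real.cos v), -(Real.cosh u * Real.sin v)] := by
  rw [ru_eq, rv_eq, cross_apply]
  funext i
  fin_cases i
  · simp; ring_nf
    linear_combination (Real.sinh u * Real.cosh u) * Real.sin_sq_add_cos_sq v
  · simp
  · simp

lemma norm3_cross (u v : ℝ) : norm3 (crossProduct (ru u v) (rv u v)) = Real.cosh u ^ 2 := by
  rw [cross_eq]
  unfold norm3 dot3
  simp only [Matrix.cons_val_zero, Matrix.cons_val_one, Matrix.head_cons,
    Matrix.cons_val_two, Matrix.tail_cons]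
  have h : Real.sinh u * Real.cosh u * (Real.sinh u * Real.cosh u) +
      -(Real.cosh u * Real.cos v) * -(Real.cosh u * Real.cos v) +
      -(Real.cosh u * Real.sin v) * -(Real.cosh u * Real.sin v) = (Real.cosh u ^ 2) ^ 2 := by
    have h1 := Real.sin_sq_add_cos_sq v
    have h2 := Real.cosh_sq u
    nlinarith
  rw [h, Real.sqrt_sq (by positivity)]

lemma nrm_eq (u v : ℝ) :
    nrm u v = (Real.cosh u)⁻¹ • ![Real.sinh u, -Real.cos v, -Real.sin v] := by
  have hc : Real.cosh u ≠ 0 := (Real.cosh_pos u).ne'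
  unfold nrm
  rw [norm3_cross, cross_eq]
  funext i
  fin_cases i <;> simp <;> field_simp <;> ring


lemma taucross_eq (u v : ℝ) :
    crossProduct (tau u v) (nrm u v) = (Real.cosh u)⁻¹ • ![Real.cos v, Real.sinh u, 0] := by
  have hc : Real.cosh u ≠ 0 := (Real.cosh_pos u).ne'
  have h2 := Real.cosh_sq u
  have h1 := Real.sin_sq_add_cos_sq v
  unfold tau
  rw [norm3_cross, nrm_eq, rhou_eq, rhov_eq, ru_eq, rv_eq, cross_apply]
  funext i
  fin_cases i
  · simp; field_simp; ring_nf
    linear_combination (Real.cosh u ^ 2 * Real.cos v) * h1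
  · simp; field_simp; ring_nf
    linear_combination (Real.sinh u * Real.cosh u ^ 2) * h1 -
      (Real.sinh u * Real.sin v ^ 2) * h2
  · simp; field_simp; ring_nf
    linear_combination (Real.sinh u * Real.sin v * Real.cos v) * h2

/-- For the catenoid and `ρ = sinh u cos v`: `ρ` is harmonic, the unit normal is
`n = (1/cosh u)(sinh u, −cos v, −sin v)`, `τ × n = (1/cosh u)(cos v, sinh u, 0)`, and
Borisenko's special Lagrangian submanifold `N` is parametrized by
`H(u,v,t) = ((u, cosh u cos v, cosh u sin v),
(cos v/cosh u + t tanh u, tanh u − t cos v/cosh u, −t sin v/cosh u))`. -/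
theorem stmt10 (u v t : ℝ) :
    rhouu u v + rhovv u v = 0 ∧
    nrm u v = (Real.cosh u)⁻¹ • ![Real.sinh u, -Real.cos v, -Real.sin v] ∧
    crossProduct (tau u v) (nrm u v) = (Real.cosh u)⁻¹ • ![Real.cos v, Real.sinh u, 0] ∧
    (catenoid u v, crossProduct (tau u v) (nrm u v) + t • nrm u v) =
      (![u, Real.cosh u * Real.cos v, Real.cosh u * Real.sin v],
       ![Real.cos v / Real.cosh u + t * Real.tanh u,
         Real.tanh u - t * (Real.cos v / Real.cosh u),
         -(t * (Real.sin v / Real.cosh u))]) := by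
  have hc : Real.cosh u ≠ 0 := (Real.cosh_pos u).ne'
  refine ⟨?_, nrm_eq u v, taucross_eq u v, ?_⟩
  · have hu : rhouu u v = Real.sinh u * Real.cos v := by
      have : (fun s => rhou s v) = fun s => Real.cosh s * Real.cos v := by
        funext s; exact rhou_eq s v
      simp [rhouu, this]
    have hv : rhovv u v = -(Real.sinh u * Real.cos v) := by
      have : (fun s => rhov u s) = fun s => -(Real.sinh u * Real.sin s) := by
        funext s; exact rhov_eq u s
      simp [rhovv, this]
    rw [hu, hv]; ring
  · rw [taucross_eq, nrm_eq]
    refine Prod.ext rfl ?_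
    funext i
    fin_cases i <;>
      simp [Real.tanh_eq_sinh_div_cosh] <;> field_simp <;> ring <;> simp
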